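/- arXiv:2112.12479 — 6 statements merged into one kernel-verified Lean document; each statement's English description precedes it below -/
import Mathlib

section
/- For every permutation π in the symmetric group S_n, the assignment π ↦ c_π, where c_π = c_{i_1}⋯c_{i_k} for any reduced decomposition (i_1,…,i_k) of π (i.e. a minimal-length expression π = s_{i_1}⋯s_{i_k} in adjacent transpositions), is a well-defined map S_n → B_n into the braid group; that is, the braid group element c_{i_1}⋯c_{i_k} is independent of the choice of reduced decomposition. -/
namespace Stmt

/-- The adjacent transposition `s_{i+1} = (i, i+1)` (0-based) in the symmetric group on
`Fin m`; indices out of range give the identity. -/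
def sNat (m i : ℕ) : Equiv.Perm (Fin m) :=
  if h : i + 1 < m then Equiv.swap ⟨i, by omega⟩ ⟨i + 1, h⟩ else 1

/-- The permutation represented by a word in the adjacent transpositions. -/
def toPerm (m : ℕ) (l : List ℕ) : Equiv.Perm (Fin m) := (l.map (sNat m)).prod

/-- `l` is a reduced decomposition of `π`: it represents `π` and has minimal length among
all words representing `π`. -/
def IsReduced (m : ℕ) (l : List ℕ) (π : Equiv.Perm (Fin m)) : Prop :=
  toPerm m l = π ∧ ∀ l' : List ℕ, toPerm m l' = π → l.length ≤ l'.length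

end Stmt
namespace Stmt

/-- The braid relations on the generators `c_1, …, c_N` (0-based: `Fin N`) of the braid
group `B_{N+1}`. -/
def braidRels (N : ℕ) : Set (FreeGroup (Fin N)) :=
  { r | ∃ i j : Fin N,
      ((i : ℕ) + 1 = (j : ℕ) ∧
        r = FreeGroup.of i * FreeGroup.of j * FreeGroup.of i *
            (FreeGroup.of j * FreeGroup.of i * FreeGroup.of j)⁻¹) ∨
      ((i : ℕ) + 2 ≤ (j : ℕ) ∧
        r = FreeGroup.of i * FreeGroup.of j * (FreeGroup.of j * FreeGroup.of i)⁻¹) }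

/-- The braid group `B_{N+1}`, with `N` generators. -/
abbrev Braid (N : ℕ) := PresentedGroup (braidRels N)

/-- The generator `c_{i+1}` (0-based index `i`) of `B_{N+1}`; out-of-range indices give `1`. -/
def bgen (N : ℕ) (i : ℕ) : Braid N :=
  if h : i < N then PresentedGroup.of (⟨i, h⟩ : Fin N) else 1

/-- The braid group element represented by a word in the generators. -/
def bword (N : ℕ) (l : List ℕ) : Braid N := (l.map (bgen N)).prod

end Stmt

namespace Stmt

open Equiv Finset

set_option maxHeartbeats 1000000

lemma sNat_apply {m i : ℕ} (h : i + 1 < m) (x : Fin m) :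
    ((sNat m i x : Fin m) : ℕ) = if (x:ℕ) = i then i+1 else if (x:ℕ) = i+1 then i else x := by
  rw [sNat, dif_pos h, Equiv.swap_apply_def]
  split_ifs <;> simp_all [Fin.ext_iff]

lemma sNat_lt_iff {m i : ℕ} (h : i + 1 < m) {x y : Fin m}
    (h1 : ¬((x:ℕ) = i ∧ (y:ℕ) = i+1)) (h2 : ¬((x:ℕ) = i+1 ∧ (y:ℕ) = i)) :
    sNat m i x < sNat m i y ↔ x < y := by
  rw [Fin.lt_def, Fin.lt_def, sNat_apply h, sNat_apply h]
  have := x.isLt; have := y.isLt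
  split_ifs <;> omega

lemma sNat_mul_self (m i : ℕ) : sNat m i * sNat m i = 1 := by
  unfold sNat; split <;> simp

/-- inversion count -/
def invc (m : ℕ) (π : Equiv.Perm (Fin m)) : ℕ :=
  ((Finset.univ : Finset (Fin m × Fin m)).filter (fun p => p.1 < p.2 ∧ π p.2 < π p.1)).card

lemma invc_smul_of_lt {m i : ℕ} (h : i + 1 < m) (π : Equiv.Perm (Fin m))
    (hlt : π⁻¹ ⟨i, by omega⟩ < π⁻¹ ⟨i+1, h⟩) :
    invc m (sNat m i * π) = invc m π + 1 := by
  set p := π⁻¹ ⟨i, by omega⟩ with hp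
  set q := π⁻¹ ⟨i+1, h⟩ with hq
  have hπp : π p = ⟨i, by omega⟩ := π.apply_symm_apply _
  have hπq : π q = ⟨i+1, h⟩ := π.apply_symm_apply _
  have toP : ∀ x : Fin m, ((π x : Fin m) : ℕ) = i → x = p := by
    intro x hx
    have : π x = π p := by rw [hπp]; exact Fin.ext hx
    exact π.injective this
  have toQ : ∀ x : Fin m, ((π x : Fin m) : ℕ) = i + 1 → x = q := by
    intro x hx
    have : π x = π q := by rw [hπq]; exact Fin.ext hx
    exact π.injective this
  have hset : (Finset.univ.filter (fun r : Fin m × Fin m => r.1 < r.2 ∧ (sNat m i * π) r.2 < (sNat m i * π) r.1))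
      = insert (p, q) (Finset.univ.filter (fun r : Fin m × Fin m => r.1 < r.2 ∧ π r.2 < π r.1)) := by
    rw [Finset.ext_iff]; rintro ⟨a, b⟩; rw [Finset.mem_filter]
    simp only [Finset.mem_filter, Finset.mem_insert, Finset.mem_univ, true_and,
      Prod.mk.injEq, Equiv.Perm.mul_apply]
    by_cases hab : a = p ∧ b = q
    · obtain ⟨rfl, rfl⟩ := hab
      have h1 : (sNat m i) (π q) < (sNat m i) (π p) := by
        rw [Fin.lt_def, sNat_apply h, sNat_apply h, hπp, hπq]
        simp
      simp [hlt, h1]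
    · constructor
      · rintro ⟨hab2, hs⟩
        refine Or.inr ⟨hab2, ?_⟩
        rw [sNat_lt_iff h ?_ ?_] at hs
        · exact hs
        · rintro ⟨hx, hy⟩
          have hbp : b = p := toP b hx
          have haq : a = q := toQ a hy
          rw [hbp, haq] at hab2
          exact absurd hab2 (not_lt_of_gt hlt)
        · rintro ⟨hx, hy⟩
          exact hab ⟨toP a hy, toQ b hx⟩
      · rintro (⟨rfl, rfl⟩ | ⟨hab2, hs⟩)
        · exact absurd ⟨rfl, rfl⟩ hab
        · refine ⟨hab2, ?_⟩
          rw [sNat_lt_iff h ?_ ?_]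
          · exact hs
          · rintro ⟨hx, hy⟩
            have hbp : b = p := toP b hx
            have haq : a = q := toQ a hy
            rw [hbp, haq] at hab2
            exact absurd hab2 (not_lt_of_gt hlt)
          · rintro ⟨hx, hy⟩
            exact hab ⟨toP a hy, toQ b hx⟩
  have hnm : (p, q) ∉ Finset.univ.filter (fun r : Fin m × Fin m => r.1 < r.2 ∧ π r.2 < π r.1) := by
    simp only [Finset.mem_filter, Finset.mem_univ, true_and, not_and]
    intro _
    rw [hπp, hπq, Fin.lt_def]
    simp
  rw [invc, invc, hset, Finset.card_insert_of_notMem hnm]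

lemma sNat_inv (m i : ℕ) : (sNat m i)⁻¹ = sNat m i := by
  rw [inv_eq_iff_mul_eq_one]; exact sNat_mul_self m i

lemma invc_smul_of_gt {m i : ℕ} (h : i + 1 < m) (π : Equiv.Perm (Fin m))
    (hgt : π⁻¹ ⟨i+1, h⟩ < π⁻¹ ⟨i, by omega⟩) :
    invc m π = invc m (sNat m i * π) + 1 := by
  have key := invc_smul_of_lt h (sNat m i * π) ?_
  · rwa [← mul_assoc, sNat_mul_self, one_mul] at key
  · rw [mul_inv_rev, sNat_inv]
    simp only [Equiv.Perm.mul_apply]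
    have e1 : sNat m i ⟨i, by omega⟩ = ⟨i+1, h⟩ := by
      apply Fin.ext; rw [sNat_apply h]; simp
    have e2 : sNat m i ⟨i+1, h⟩ = ⟨i, by omega⟩ := by
      apply Fin.ext; rw [sNat_apply h]; simp
    rw [e1, e2]
    exact hgt

lemma toPerm_nil (m : ℕ) : toPerm m [] = 1 := rfl

lemma toPerm_cons (m i : ℕ) (l : List ℕ) : toPerm m (i :: l) = sNat m i * toPerm m l := by
  simp [toPerm]

lemma toPerm_append (m : ℕ) (l l' : List ℕ) :
    toPerm m (l ++ l') = toPerm m l * toPerm m l' := by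
  simp [toPerm]

lemma invc_one (m : ℕ) : invc m (1 : Equiv.Perm (Fin m)) = 0 := by
  rw [invc, Finset.card_eq_zero, Finset.filter_eq_empty_iff]
  rintro ⟨a, b⟩ _
  simp only [Equiv.Perm.one_apply, not_and]
  intro h1 h2
  exact absurd h1 (not_lt_of_gt h2)

lemma inv_ne {m i : ℕ} (h : i + 1 < m) (π : Equiv.Perm (Fin m)) :
    π⁻¹ ⟨i, by omega⟩ ≠ π⁻¹ ⟨i+1, h⟩ := by
  intro hc
  have := π⁻¹.injective hc
  simp [Fin.ext_iff] at this

lemma invc_smul_le {m : ℕ} (i : ℕ) (π : Equiv.Perm (Fin m)) :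
    invc m (sNat m i * π) ≤ invc m π + 1 := by
  by_cases h : i + 1 < m
  · rcases lt_or_gt_of_ne (inv_ne h π) with hlt | hgt
    · rw [invc_smul_of_lt h π hlt]
    · rw [invc_smul_of_gt h π hgt]; omega
  · rw [sNat, dif_neg h, one_mul]; omega

lemma invc_toPerm_le (m : ℕ) (l : List ℕ) : invc m (toPerm m l) ≤ l.length := by
  induction l with
  | nil => rw [toPerm_nil, invc_one]; simp
  | cons i l ih =>
    rw [toPerm_cons]
    calc invc m (sNat m i * toPerm m l) ≤ invc m (toPerm m l) + 1 := invc_smul_le i _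
    _ ≤ l.length + 1 := by omega
    _ = (i :: l).length := by simp


lemma eq_one_of_no_descent {m : ℕ} (π : Equiv.Perm (Fin m))
    (hmono : ∀ i : ℕ, ∀ h : i + 1 < m, π ⟨i, by omega⟩ < π ⟨i+1, h⟩) : π = 1 := by
  have step : ∀ a b : Fin m, (b : ℕ) = (a : ℕ) + 1 → π a < π b := by
    intro a b hb
    have h1 : (a : ℕ) + 1 < m := by omega
    have e2 : b = ⟨(a : ℕ) + 1, h1⟩ := Fin.ext (by simp [hb])
    have h2 := hmono (a : ℕ) h1
    rw [Fin.eta] at h2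
    rwa [← e2] at h2
  have key : ∀ k : ℕ, ∀ a b : Fin m, (b : ℕ) = (a : ℕ) + k + 1 → π a < π b := by
    intro k
    induction k with
    | zero => exact fun a b hb => step a b (by omega)
    | succ k ih =>
      intro a b hb
      have h1 : (a : ℕ) + k + 1 < m := by omega
      exact (ih a ⟨(a : ℕ) + k + 1, h1⟩ (by simp)).trans (step _ b (by simp [hb]; omega))
  have hsm : StrictMono π := by
    intro a b hab
    have : (b : ℕ) = (a : ℕ) + ((b : ℕ) - (a : ℕ) - 1) + 1 := by
      have := (Fin.lt_def).mp hab; omega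
    exact key _ a b this
  have hrange : Set.range π = Set.range (id : Fin m → Fin m) := by
    rw [Set.range_id, Set.range_eq_univ]
    exact π.surjective
  haveI : WellFoundedLT (Fin m) := Finite.to_wellFoundedLT
  have : (π : Fin m → Fin m) = id := (StrictMono.range_inj hsm strictMono_id).1 hrange
  ext x
  simp [this]

lemma exists_descent {m : ℕ} (π : Equiv.Perm (Fin m)) (hπ : π ≠ 1) :
    ∃ (i : ℕ) (h : i + 1 < m), π ⟨i+1, h⟩ < π ⟨i, by omega⟩ := by
  by_contra hc
  push_neg at hc
  refine hπ (eq_one_of_no_descent π ?_)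
  intro i h
  rcases lt_trichotomy (π ⟨i, by omega⟩) (π ⟨i+1, h⟩) with h1 | h1 | h1
  · exact h1
  · exact absurd (π.injective h1) (by simp [Fin.ext_iff])
  · exact absurd h1 (by simpa using hc i h)

lemma exists_ldescent {m : ℕ} (π : Equiv.Perm (Fin m)) (hπ : π ≠ 1) :
    ∃ (i : ℕ) (h : i + 1 < m), π⁻¹ ⟨i+1, h⟩ < π⁻¹ ⟨i, by omega⟩ := by
  refine exists_descent π⁻¹ ?_
  exact fun hc => hπ (inv_eq_one.mp hc)

lemma exists_reduced_word {m : ℕ} : ∀ k : ℕ, ∀ π : Equiv.Perm (Fin m), invc m π = k →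
    ∃ l : List ℕ, toPerm m l = π ∧ l.length = k := by
  intro k
  induction k using Nat.strong_induction_on with
  | _ k ih =>
    intro π hk
    by_cases hπ : π = 1
    · subst hπ
      rw [invc_one] at hk
      exact ⟨[], toPerm_nil m, by simp [hk]⟩
    · obtain ⟨i, h, hd⟩ := exists_ldescent π hπ
      have hstep := invc_smul_of_gt h π hd
      rw [hk] at hstep
      obtain ⟨l, hl, hlen⟩ := ih (invc m (sNat m i * π)) (by omega) (sNat m i * π) rfl
      refine ⟨i :: l, ?_, by simp [hlen]; omega⟩
      rw [toPerm_cons, hl, ← mul_assoc, sNat_mul_self, one_mul]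

lemma isReduced_iff {m : ℕ} (l : List ℕ) (π : Equiv.Perm (Fin m)) :
    IsReduced m l π ↔ toPerm m l = π ∧ l.length = invc m π := by
  constructor
  · rintro ⟨h1, h2⟩
    obtain ⟨l', hl', hlen'⟩ := exists_reduced_word (invc m π) π rfl
    refine ⟨h1, le_antisymm ?_ ?_⟩
    · have := h2 l' hl'; omega
    · rw [← h1]; exact invc_toPerm_le m l
  · rintro ⟨h1, h2⟩
    refine ⟨h1, fun l' hl' => ?_⟩
    have := invc_toPerm_le m l'
    rw [hl'] at this
    omega

lemma mem_range_of_isReduced {m : ℕ} {l : List ℕ} {π : Equiv.Perm (Fin m)}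
    (hred : IsReduced m l π) : ∀ i ∈ l, i + 1 < m := by
  have hfil : ∀ l' : List ℕ, toPerm m (l'.filter (fun i => decide (i + 1 < m))) = toPerm m l' := by
    intro l'
    induction l' with
    | nil => rfl
    | cons i t ih =>
      by_cases h : i + 1 < m
      · rw [List.filter_cons_of_pos (by simpa using h), toPerm_cons, toPerm_cons, ih]
      · rw [List.filter_cons_of_neg (by simpa using h), toPerm_cons, ih, sNat, dif_neg h, one_mul]
  have hsub : (l.filter (fun i => decide (i + 1 < m))).Sublist l := List.filter_sublist
  have hle : l.length ≤ (l.filter (fun i => decide (i + 1 < m))).length :=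
    hred.2 _ (by rw [hfil l, hred.1])
  have heq : l.filter (fun i => decide (i + 1 < m)) = l :=
    hsub.eq_of_length (le_antisymm hsub.length_le hle)
  intro i hi
  rw [← heq] at hi
  simpa using List.of_mem_filter hi

lemma isReduced_cons {m : ℕ} {i : ℕ} {l : List ℕ} {π : Equiv.Perm (Fin m)}
    (h : i + 1 < m) (hred : IsReduced m (i :: l) π) :
    IsReduced m l (sNat m i * π) ∧ π⁻¹ ⟨i+1, h⟩ < π⁻¹ ⟨i, by omega⟩ := by
  rw [isReduced_iff] at hred
  obtain ⟨h1, h2⟩ := hred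
  have htl : toPerm m l = sNat m i * π := by
    rw [← h1, toPerm_cons, ← mul_assoc, sNat_mul_self, one_mul]
  have hd : π⁻¹ ⟨i+1, h⟩ < π⁻¹ ⟨i, by omega⟩ := by
    rcases lt_or_gt_of_ne (inv_ne h π) with hlt | hgt
    · exfalso
      have := invc_smul_of_lt h π hlt
      have hle := invc_toPerm_le m l
      rw [htl, this] at hle
      simp at h2
      omega
    · exact hgt
  have hstep := invc_smul_of_gt h π hd
  refine ⟨(isReduced_iff l _).mpr ⟨htl, ?_⟩, hd⟩
  simp at h2
  omega
lemma sNat_out {m j : ℕ} (hj : ¬ (j + 1 < m)) : sNat m j = 1 := by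
  rw [sNat]; exact dif_neg hj

-- Perm relations
lemma sNat_commute {m i j : ℕ} (hfar : i + 2 ≤ j ∨ j + 2 ≤ i) :
    sNat m i * sNat m j = sNat m j * sNat m i := by
  by_cases hi : i + 1 < m
  · by_cases hj : j + 1 < m
    · ext x
      simp only [Equiv.Perm.mul_apply]
      simp only [sNat_apply hi, sNat_apply hj]
      have := x.isLt
      split_ifs <;> omega
    · rw [sNat_out hj, mul_one, one_mul]
  · rw [sNat_out hi, mul_one, one_mul]

lemma sNat_braid {m i : ℕ} (h : i + 2 < m) :
    sNat m i * sNat m (i+1) * sNat m i = sNat m (i+1) * sNat m i * sNat m (i+1) := by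
  have hi : i + 1 < m := by omega
  ext x
  simp only [Equiv.Perm.mul_apply]
  simp only [sNat_apply hi, sNat_apply h]
  have := x.isLt
  split_ifs <;> omega

-- descent notation
def LD {m : ℕ} (π : Equiv.Perm (Fin m)) (i : ℕ) (h : i + 1 < m) : Prop :=
  π⁻¹ ⟨i+1, h⟩ < π⁻¹ ⟨i, by omega⟩

lemma smul_inv_apply {m i : ℕ} (h : i + 1 < m) (π : Equiv.Perm (Fin m)) (x : Fin m) :
    (sNat m i * π)⁻¹ x = π⁻¹ (sNat m i x) := by
  rw [mul_inv_rev, sNat_inv, Equiv.Perm.mul_apply]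

lemma sNat_apply_eq {m i : ℕ} (h : i + 1 < m) (x : ℕ) (hx : x < m)
    (hne : x ≠ i ∧ x ≠ i + 1) : sNat m i ⟨x, hx⟩ = ⟨x, hx⟩ := by
  apply Fin.ext; rw [sNat_apply h]; simp [hne.1, hne.2]

lemma sNat_apply_lo {m i : ℕ} (h : i + 1 < m) : sNat m i ⟨i, by omega⟩ = ⟨i+1, h⟩ := by
  apply Fin.ext; rw [sNat_apply h]; simp

lemma sNat_apply_hi {m i : ℕ} (h : i + 1 < m) : sNat m i ⟨i+1, h⟩ = ⟨i, by omega⟩ := by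
  apply Fin.ext; rw [sNat_apply h]; simp

lemma LD_far {m i j : ℕ} (hi : i + 1 < m) (hj : j + 1 < m)
    (hfar : i + 2 ≤ j ∨ j + 2 ≤ i) (π : Equiv.Perm (Fin m))
    (hdj : LD π j hj) : LD (sNat m i * π) j hj := by
  unfold LD at *
  rw [smul_inv_apply hi, smul_inv_apply hi,
    sNat_apply_eq hi j (by omega) (by omega),
    sNat_apply_eq hi (j+1) (by omega) (by omega)]
  exact hdj

lemma LD_near1 {m i : ℕ} (h : i + 2 < m) (π : Equiv.Perm (Fin m))
    (hd1 : LD π i (by omega)) (hd2 : LD π (i+1) h) :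
    LD (sNat m i * π) (i+1) h := by
  unfold LD at *
  rw [smul_inv_apply (by omega : i + 1 < m), smul_inv_apply (by omega : i + 1 < m)]
  rw [sNat_apply_eq (by omega) (i+2) (by omega) (by omega), sNat_apply_hi (by omega)]
  exact hd2.trans hd1

lemma LD_near2 {m i : ℕ} (h : i + 2 < m) (π : Equiv.Perm (Fin m))
    (hd2 : LD π (i+1) h) :
    LD (sNat m (i+1) * (sNat m i * π)) i (by omega) := by
  unfold LD at *
  rw [smul_inv_apply h, smul_inv_apply h, smul_inv_apply (by omega : i + 1 < m),
    smul_inv_apply (by omega : i + 1 < m)]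
  rw [sNat_apply_eq h i (by omega) (by omega), sNat_apply_lo (by omega : i + 1 < m)]
  rw [show sNat m (i+1) ⟨i+1, by omega⟩ = ⟨i+2, by omega⟩ from sNat_apply_lo h]
  rw [sNat_apply_eq (by omega : i + 1 < m) (i+2) (by omega) (by omega)]
  exact hd2

-- braid group lemmas
lemma bword_nil (N : ℕ) : bword N [] = 1 := rfl

lemma bword_cons (N i : ℕ) (l : List ℕ) : bword N (i :: l) = bgen N i * bword N l := by
  simp [bword]

lemma rel_eq {N : ℕ} {x y : FreeGroup (Fin N)} (hr : x * y⁻¹ ∈ braidRels N) :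
    PresentedGroup.mk (braidRels N) x = PresentedGroup.mk (braidRels N) y := by
  have h1 : PresentedGroup.mk (braidRels N) (x * y⁻¹) = 1 := by
    change QuotientGroup.mk _ = 1
    exact (QuotientGroup.eq_one_iff (x * y⁻¹)).mpr (Subgroup.subset_normalClosure hr)
  rw [map_mul, map_inv] at h1
  exact (mul_inv_eq_one.mp h1)

lemma bgen_braid {N i : ℕ} (h : i + 1 < N) :
    bgen N i * bgen N (i+1) * bgen N i = bgen N (i+1) * bgen N i * bgen N (i+1) := by
  rw [bgen, bgen, dif_pos h, dif_pos (by omega : i < N)]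
  have := rel_eq (N := N) (x := FreeGroup.of ⟨i, by omega⟩ * FreeGroup.of ⟨i+1, h⟩ * FreeGroup.of ⟨i, by omega⟩)
    (y := FreeGroup.of ⟨i+1, h⟩ * FreeGroup.of ⟨i, by omega⟩ * FreeGroup.of ⟨i+1, h⟩)
    ⟨⟨i, by omega⟩, ⟨i+1, h⟩, Or.inl ⟨rfl, rfl⟩⟩
  simpa [PresentedGroup.of, map_mul] using this

lemma bgen_comm {N i j : ℕ} (hij : i + 2 ≤ j) (hj : j < N) :
    bgen N i * bgen N j = bgen N j * bgen N i := by
  rw [bgen, bgen, dif_pos hj, dif_pos (by omega : i < N)]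
  have := rel_eq (N := N) (x := FreeGroup.of ⟨i, by omega⟩ * FreeGroup.of ⟨j, hj⟩)
    (y := FreeGroup.of ⟨j, hj⟩ * FreeGroup.of ⟨i, by omega⟩)
    ⟨⟨i, by omega⟩, ⟨j, hj⟩, Or.inr ⟨by simpa using hij, rfl⟩⟩
  simpa [PresentedGroup.of, map_mul] using this
lemma bword_append (N : ℕ) (l l' : List ℕ) :
    bword N (l ++ l') = bword N l * bword N l' := by
  simp [bword]

lemma braid5 {m i : ℕ} (h : i + 2 < m) (π : Equiv.Perm (Fin m)) :
    sNat m i * (sNat m (i+1) * (sNat m i * (sNat m (i+1) * (sNat m i * π)))) =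
      sNat m (i+1) * π := by
  have hb := sNat_braid h
  have hs := sNat_mul_self m (i+1)
  have hs2 := sNat_mul_self m i
  simp only [← mul_assoc]
  rw [hb, mul_assoc (sNat m (i+1) * sNat m i), hs, mul_one, mul_assoc (sNat m (i+1)), hs2,
    mul_one]

/-- far case core -/
lemma far_case {n k : ℕ} {π : Equiv.Perm (Fin (n+1))} {i j : ℕ} {a b : List ℕ}
    (IH : ∀ k' < k + 1, ∀ σ : Equiv.Perm (Fin (n+1)), ∀ l₁ l₂ : List ℕ,
      IsReduced (n+1) l₁ σ → IsReduced (n+1) l₂ σ → l₁.length = k' →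
      bword n l₁ = bword n l₂)
    (hfar : i + 2 ≤ j ∨ j + 2 ≤ i)
    (h₁ : IsReduced (n+1) (i :: a) π) (h₂ : IsReduced (n+1) (j :: b) π)
    (hlen : (i :: a).length = k + 1) :
    bword n (i :: a) = bword n (j :: b) := by
  have hi : i + 1 < (n+1) := mem_range_of_isReduced h₁ i List.mem_cons_self
  have hj : j + 1 < (n+1) := mem_range_of_isReduced h₂ j List.mem_cons_self
  obtain ⟨redA, descI⟩ := isReduced_cons hi h₁
  obtain ⟨redB, descJ⟩ := isReduced_cons hj h₂
  have hinvπ : invc (n+1) π = k + 1 := by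
    have h' := (isReduced_iff _ _).mp h₁
    simp only [List.length_cons] at h' hlen
    omega
  have hAlen : a.length = k := by simp at hlen; omega
  have hBlen : b.length = k := by
    have h' := (isReduced_iff _ _).mp h₂
    simp only [List.length_cons] at h'
    omega
  have hinvA : invc (n+1) (sNat (n+1) i * π) = k := by
    have := (isReduced_iff _ _).mp redA
    omega
  have hinvB : invc (n+1) (sNat (n+1) j * π) = k := by
    have := (isReduced_iff _ _).mp redB
    omega
  have descJ' : LD (sNat (n+1) i * π) j hj := LD_far hi hj hfar π descJ
  have hstep : invc (n+1) (sNat (n+1) i * π) = invc (n+1) (sNat (n+1) j * (sNat (n+1) i * π)) + 1 :=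
    invc_smul_of_gt hj _ descJ'
  obtain ⟨u, hu, hulen⟩ := exists_reduced_word (invc (n+1) (sNat (n+1) j * (sNat (n+1) i * π))) _ rfl
  have redJU : IsReduced (n+1) (j :: u) (sNat (n+1) i * π) := by
    rw [isReduced_iff]
    constructor
    · rw [toPerm_cons, hu, ← mul_assoc, sNat_mul_self, one_mul]
    · simp only [List.length_cons, hulen]; omega
  have redIU : IsReduced (n+1) (i :: u) (sNat (n+1) j * π) := by
    rw [isReduced_iff]
    constructor
    · rw [toPerm_cons, hu, ← mul_assoc, ← mul_assoc, sNat_commute hfar, mul_assoc (sNat (n+1) j),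
        sNat_mul_self, mul_one]
    · simp only [List.length_cons, hulen]; omega
  have e1 : bword n a = bword n (j :: u) :=
    IH k (by omega) (sNat (n+1) i * π) a (j :: u) redA redJU hAlen
  have e2 : bword n b = bword n (i :: u) :=
    IH k (by omega) (sNat (n+1) j * π) b (i :: u) redB redIU hBlen
  rw [bword_cons, bword_cons, e1, e2, bword_cons, bword_cons, ← mul_assoc, ← mul_assoc]
  congr 1
  rcases hfar with hf | hf
  · exact bgen_comm hf (by omega)
  · exact (bgen_comm hf (by omega)).symm

/-- near case core: second word starts with i+1 -/
lemma near_case {n k : ℕ} {π : Equiv.Perm (Fin (n+1))} {i : ℕ} {a b : List ℕ}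
    (IH : ∀ k' < k + 1, ∀ σ : Equiv.Perm (Fin (n+1)), ∀ l₁ l₂ : List ℕ,
      IsReduced (n+1) l₁ σ → IsReduced (n+1) l₂ σ → l₁.length = k' →
      bword n l₁ = bword n l₂)
    (h₁ : IsReduced (n+1) (i :: a) π) (h₂ : IsReduced (n+1) ((i+1) :: b) π)
    (hlen : (i :: a).length = k + 1) :
    bword n (i :: a) = bword n ((i+1) :: b) := by
  have hi : i + 1 < (n+1) := mem_range_of_isReduced h₁ i List.mem_cons_self
  have hj : i + 2 < (n+1) := mem_range_of_isReduced h₂ (i+1) List.mem_cons_self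
  obtain ⟨redA, descI⟩ := isReduced_cons hi h₁
  obtain ⟨redB, descJ⟩ := isReduced_cons hj h₂
  have hinvπ : invc (n+1) π = k + 1 := by
    have h' := (isReduced_iff _ _).mp h₁
    simp only [List.length_cons] at h' hlen
    omega
  have hAlen : a.length = k := by simp at hlen; omega
  have hBlen : b.length = k := by
    have h' := (isReduced_iff _ _).mp h₂
    simp only [List.length_cons] at h'
    omega
  have hinvA : invc (n+1) (sNat (n+1) i * π) = k := by
    have := (isReduced_iff _ _).mp redA
    omega
  have hinvB : invc (n+1) (sNat (n+1) (i+1) * π) = k := by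
    have := (isReduced_iff _ _).mp redB
    omega
  have d1 : LD (sNat (n+1) i * π) (i+1) hj := LD_near1 hj π descI descJ
  have d2 : LD (sNat (n+1) (i+1) * (sNat (n+1) i * π)) i (by omega) := LD_near2 hj π descJ
  have hstep1 : invc (n+1) (sNat (n+1) i * π) = invc (n+1) (sNat (n+1) (i+1) * (sNat (n+1) i * π)) + 1 :=
    invc_smul_of_gt hj _ d1
  have hstep2 : invc (n+1) (sNat (n+1) (i+1) * (sNat (n+1) i * π)) =
      invc (n+1) (sNat (n+1) i * (sNat (n+1) (i+1) * (sNat (n+1) i * π))) + 1 :=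
    invc_smul_of_gt hi _ d2
  obtain ⟨u, hu, hulen⟩ :=
    exists_reduced_word (invc (n+1) (sNat (n+1) i * (sNat (n+1) (i+1) * (sNat (n+1) i * π)))) _ rfl
  have redW1 : IsReduced (n+1) ((i+1) :: i :: u) (sNat (n+1) i * π) := by
    rw [isReduced_iff]
    constructor
    · rw [toPerm_cons, toPerm_cons, hu,
        ← mul_assoc (sNat (n+1) i) (sNat (n+1) i), sNat_mul_self, one_mul,
        ← mul_assoc (sNat (n+1) (i+1)) (sNat (n+1) (i+1)), sNat_mul_self, one_mul]
    · simp only [List.length_cons, hulen]; omega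
  have redW2 : IsReduced (n+1) (i :: (i+1) :: u) (sNat (n+1) (i+1) * π) := by
    rw [isReduced_iff]
    constructor
    · rw [toPerm_cons, toPerm_cons, hu]
      exact braid5 hj π
    · simp only [List.length_cons, hulen]; omega
  have e1 : bword n a = bword n ((i+1) :: i :: u) :=
    IH k (by omega) (sNat (n+1) i * π) a _ redA redW1 hAlen
  have e2 : bword n b = bword n (i :: (i+1) :: u) :=
    IH k (by omega) (sNat (n+1) (i+1) * π) b _ redB redW2 hBlen
  rw [bword_cons, bword_cons, e1, e2]
  simp only [bword_cons, ← mul_assoc]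
  congr 1
  exact bgen_braid (by omega)

theorem main_induction (n : ℕ) : ∀ k : ℕ, ∀ π : Equiv.Perm (Fin (n+1)), ∀ l₁ l₂ : List ℕ,
    IsReduced (n+1) l₁ π → IsReduced (n+1) l₂ π → l₁.length = k →
    bword n l₁ = bword n l₂ := by
  intro k
  induction k using Nat.strong_induction_on with
  | _ k IH =>
  intro π l₁ l₂ h₁ h₂ hlen
  have hl2 : l₂.length = k := by
    have e1 := (isReduced_iff _ _).mp h₁
    have e2 := (isReduced_iff _ _).mp h₂
    omega
  match k, hlen with
  | 0, hlen =>
    rw [List.length_eq_zero_iff.mp hlen, List.length_eq_zero_iff.mp hl2]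
  | (k+1), hlen =>
    match l₁, l₂, hlen, hl2 with
    | i :: a, j :: b, hlen, hl2 =>
      have IH' : ∀ k' < k + 1, ∀ σ : Equiv.Perm (Fin (n+1)), ∀ l₁ l₂ : List ℕ,
          IsReduced (n+1) l₁ σ → IsReduced (n+1) l₂ σ → l₁.length = k' →
          bword n l₁ = bword n l₂ := fun k' hk' => IH k' (by omega)
      by_cases hij : i = j
      · subst hij
        have hi : i + 1 < (n+1) := mem_range_of_isReduced h₁ i List.mem_cons_self
        obtain ⟨redA, _⟩ := isReduced_cons hi h₁
        obtain ⟨redB, _⟩ := isReduced_cons hi h₂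
        rw [bword_cons, bword_cons,
          IH' k (by omega) (sNat (n+1) i * π) a b redA redB (by simp at hlen; omega)]
      · rcases Nat.lt_or_ge (i+1) j with hcase | hcase
        · exact far_case IH' (Or.inl (by omega)) h₁ h₂ hlen
        · rcases Nat.lt_or_ge (j+1) i with hcase2 | hcase2
          · exact far_case IH' (Or.inr (by omega)) h₁ h₂ hlen
          · -- |i - j| = 1
            rcases Nat.lt_or_ge i j with ho | ho
            · have : j = i + 1 := by omega
              subst this
              exact near_case IH' h₁ h₂ hlen
            · have : i = j + 1 := by omega
              subst this
              exact (near_case IH' h₂ h₁ (by simp at hlen hl2 ⊢; omega)).symm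
end Stmt

namespace Stmt

/-- **Matsumoto.** For a permutation `π` of `{1,…,n+1}`, the braid-group
element `c_{i_1} ⋯ c_{i_k}` obtained from a reduced decomposition `(i_1,…,i_k)` of `π`
is independent of the choice of reduced decomposition; hence `π ↦ c_π` is a well-defined
map `S_{n+1} → B_{n+1}`. -/
theorem matsumoto_well_defined (n : ℕ) (π : Equiv.Perm (Fin (n + 1))) (l₁ l₂ : List ℕ)
    (h₁ : IsReduced (n + 1) l₁ π) (h₂ : IsReduced (n + 1) l₂ π) :
    bword n l₁ = bword n l₂ :=
  main_induction n l₁.length π l₁ l₂ h₁ h₂ rfl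

end Stmt
end

section
/- Let V be a vector space over a field k, c ∈ End(V), w ∈ V, m ∈ ℕ₀, q ∈ k. Assume w, c(w), …, c^m(w) are linearly independent and c^{m+1}(w) = q·w. Let π : V → V/ker(id + c) be the quotient map. If q = (−1)^{m+1}, then π(c(w)), …, π(c^m(w)) are linearly independent and Σ_{k=1}^m (−1)^k π(c^k(w)) = −π(w). If q ≠ (−1)^{m+1}, then π(w), π(c(w)), …, π(c^m(w)) are linearly independent. -/
/-- Let `V` be a vector space over a field `k`, `c ∈ End(V)`, `w ∈ V`,
`m ∈ ℕ₀`, `q ∈ k`.  Assume `w, c(w), …, c^m(w)` are linearly independent and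
`c^{m+1}(w) = q • w`.  Let `π : V → V / ker(id + c)` be the quotient map.
If `q = (−1)^{m+1}`, then `π(c(w)), …, π(c^m(w))` are linearly independent and
`Σ_{j=1}^m (−1)^j π(c^j w) = −π(w)`.  If `q ≠ (−1)^{m+1}`, then
`π(w), π(c(w)), …, π(c^m(w))` are linearly independent. -/
theorem quotient_images_linearIndependent
    (k : Type*) [Field k] (V : Type*) [AddCommGroup V] [Module k V]
    (c : Module.End k V) (w : V) (m : ℕ) (q : k)
    (hli : LinearIndependent k (fun i : Fin (m + 1) => (c ^ (i : ℕ)) w))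
    (hcw : (c ^ (m + 1)) w = q • w) :
    (q = (-1) ^ (m + 1) →
      (LinearIndependent k
          (fun i : Fin m => (LinearMap.ker (1 + c)).mkQ ((c ^ ((i : ℕ) + 1)) w)) ∧
        ∑ j ∈ Finset.Icc 1 m,
            ((-1 : k) ^ j) • (LinearMap.ker (1 + c)).mkQ ((c ^ j) w) =
          - (LinearMap.ker (1 + c)).mkQ w)) ∧
    (q ≠ (-1) ^ (m + 1) →
      LinearIndependent k
        (fun i : Fin (m + 1) => (LinearMap.ker (1 + c)).mkQ ((c ^ (i : ℕ)) w))) := by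
  set π := (LinearMap.ker (1 + c)).mkQ with hπ
  -- coefficients in span of c^0 w .. c^m w vanish
  have hcoeff : ∀ b : ℕ → k,
      (∑ i ∈ Finset.range (m+1), b i • (c^i) w) = 0 → ∀ i ≤ m, b i = 0 := by
    intro b hb i hi
    rw [← Fin.sum_univ_eq_sum_range (fun i => b i • (c^i) w)] at hb
    exact Fintype.linearIndependent_iff.mp hli (fun i => b (i : ℕ)) hb ⟨i, by omega⟩
  -- expansion of (1+c) applied to a combination
  have expand : ∀ a : ℕ → k,
      (1 + c) (∑ i ∈ Finset.range (m+1), a i • (c^i) w)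
        = (a 0 + q * a m) • w + ∑ j ∈ Finset.range m, (a (j+1) + a j) • (c^(j+1)) w := by
    intro a
    have hc : ∀ i : ℕ, c ((c^i) w) = (c^(i+1)) w := by
      intro i; rw [pow_succ']; rfl
    have h1 : (1 + c) (∑ i ∈ Finset.range (m+1), a i • (c^i) w)
        = (∑ i ∈ Finset.range (m+1), a i • (c^i) w)
          + ∑ i ∈ Finset.range (m+1), a i • (c^(i+1)) w := by
      rw [LinearMap.add_apply, Module.End.one_apply, map_sum]
      congr 1
      refine Finset.sum_congr rfl fun i _ => ?_
      rw [map_smul, hc]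
    rw [h1, Finset.sum_range_succ (fun i => a i • (c^(i+1)) w),
      Finset.sum_range_succ' (fun i => a i • (c^i) w)]
    simp only [pow_zero, Module.End.one_apply, hcw, smul_smul]
    rw [mul_comm q (a m)]
    simp only [add_smul]
    rw [Finset.sum_add_distrib]
    abel
  -- main coefficient extraction
  have key : ∀ a : ℕ → k,
      (1 + c) (∑ i ∈ Finset.range (m+1), a i • (c^i) w) = 0 →
      (∀ j, j < m → a (j+1) = - a j) ∧ a 0 + q * a m = 0 := by
    intro a ha
    set B : ℕ → k := fun i => match i with
      | 0 => a 0 + q * a m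
      | (j+1) => a (j+1) + a j with hB
    have hsum : ∑ i ∈ Finset.range (m+1), B i • (c^i) w = 0 := by
      rw [Finset.sum_range_succ' (fun i => B i • (c^i) w)]
      simp only [hB, pow_zero, Module.End.one_apply]
      rw [add_comm, ← expand a, ha]
    have hz := hcoeff B hsum
    constructor
    · intro j hj
      have := hz (j+1) (by omega)
      simp only [hB] at this
      linear_combination this
    · exact hz 0 (by omega)
  have alt : ∀ (a : ℕ → k), (∀ j, j < m → a (j+1) = - a j) →
      ∀ j ≤ m, a j = (-1)^j * a 0 := by
    intro a h j hj
    induction j with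
    | zero => simp
    | succ n ih =>
      rw [h n (by omega), ih (by omega)]
      ring
  -- bridge: vanishing in quotient gives (1+c)-kernel membership
  have hker : ∀ a : ℕ → k,
      (∑ i ∈ Finset.range (m+1), a i • π ((c^i) w)) = 0 →
      (1 + c) (∑ i ∈ Finset.range (m+1), a i • (c^i) w) = 0 := by
    intro a ha
    have : π (∑ i ∈ Finset.range (m+1), a i • (c^i) w) = 0 := by
      rw [map_sum]
      simpa [map_smul] using ha
    rw [hπ, Submodule.mkQ_apply, Submodule.Quotient.mk_eq_zero] at this
    exact this
  constructor
  · intro hq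
    constructor
    · rw [Fintype.linearIndependent_iff]
      intro g hg
      set a : ℕ → k := fun i => match i with
        | 0 => 0
        | (j+1) => if h : j < m then g ⟨j, h⟩ else 0 with ha
      have h0 : ∑ i ∈ Finset.range (m+1), a i • π ((c^i) w) = 0 := by
        rw [Finset.sum_range_succ' (fun i => a i • π ((c^i) w))]
        simp only [ha, zero_smul, add_zero]
        rw [← Fin.sum_univ_eq_sum_range
          (fun j => (if h : j < m then g ⟨j, h⟩ else 0) • π ((c^(j+1)) w))]
        rw [← hg]
        refine Finset.sum_congr rfl fun i _ => ?_
        rw [dif_pos i.isLt]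
      have hk := key a (hker a h0)
      have hall := alt a hk.1
      intro i
      have := hall (i + 1) (by omega)
      simp only [ha] at this
      rw [dif_pos i.isLt] at this
      simpa using this
    · have hx : (1 + c) (∑ i ∈ Finset.range (m+1), ((-1:k)^i) • (c^i) w) = 0 := by
        rw [expand (fun i => (-1:k)^i)]
        have e1 : ((-1:k)^0 + q * (-1)^m) = 0 := by
          rw [hq, pow_zero, ← pow_add]
          rw [(Odd.neg_one_pow (⟨m, by omega⟩ : Odd (m + 1 + m)) : ((-1:k))^(m+1+m) = -1)]
          ring
        rw [e1, zero_smul, zero_add]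
        refine Finset.sum_eq_zero fun j _ => ?_
        have : ((-1:k)^(j+1) + (-1)^j) = 0 := by rw [pow_succ]; ring
        rw [this, zero_smul]
      have hq0 : π (∑ i ∈ Finset.range (m+1), ((-1:k)^i) • (c^i) w) = 0 := by
        rw [hπ, Submodule.mkQ_apply, Submodule.Quotient.mk_eq_zero]
        exact hx
      rw [map_sum] at hq0
      simp only [map_smul] at hq0
      rw [Finset.sum_range_succ' (fun i => ((-1:k)^i) • π ((c^i) w))] at hq0
      simp only [pow_zero, one_smul, Module.End.one_apply] at hq0
      have hIcc : ∑ j ∈ Finset.Icc 1 m, ((-1 : k) ^ j) • π ((c ^ j) w)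
          = ∑ j ∈ Finset.range m, ((-1:k)^(j+1)) • π ((c^(j+1)) w) := by
        rw [← Finset.Ico_add_one_right_eq_Icc, Finset.sum_Ico_eq_sum_range]
        refine Finset.sum_congr rfl fun j _ => ?_
        rw [add_comm 1 j]
      rw [hIcc]
      exact eq_neg_of_add_eq_zero_left hq0
  · intro hq
    rw [Fintype.linearIndependent_iff]
    intro g hg
    set a : ℕ → k := fun i => if h : i < m + 1 then g ⟨i, h⟩ else 0 with ha
    have h0 : ∑ i ∈ Finset.range (m+1), a i • π ((c^i) w) = 0 := by
      rw [← Fin.sum_univ_eq_sum_range (fun i => a i • π ((c^i) w))]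
      rw [← hg]
      refine Finset.sum_congr rfl fun i _ => ?_
      simp only [ha]
      rw [dif_pos i.isLt]
    have hk := key a (hker a h0)
    have hall := alt a hk.1
    have hm : a m = (-1)^m * a 0 := hall m (le_refl m)
    have h2 : a 0 * (1 + q * (-1)^m) = 0 := by
      have := hk.2
      rw [hm] at this
      linear_combination this
    have hne : (1 : k) + q * (-1)^m ≠ 0 := by
      intro h0'
      apply hq
      have h1 : q * (-1:k)^m = -1 := by linear_combination h0'
      have h2' : ((-1:k)^m) * ((-1)^m) = 1 := by
        rw [← pow_add]
        exact Even.neg_one_pow ⟨m, rfl⟩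
      calc q = q * ((-1:k)^m * (-1)^m) := by rw [h2', mul_one]
        _ = (q * (-1)^m) * (-1)^m := by ring
        _ = (-1) * (-1)^m := by rw [h1]
        _ = (-1)^(m+1) := by rw [pow_succ]; ring
    have ha0 : a 0 = 0 := by
      rcases mul_eq_zero.mp h2 with h | h
      · exact h
      · exact absurd h hne
    intro i
    have := hall i (by omega)
    rw [ha0, mul_zero] at this
    simp only [ha] at this
    rw [dif_pos i.isLt] at this
    exact this
end

section
/- Let k be a field, θ ∈ ℕ, and let D be a Dynkin datum consisting of D_j ∈ k^× for j ∈ {1,…,θ} and D_{jk} = D_{kj} ∈ k^× for j ≠ k (with D_{jj} := D_j²). Fix i and suppose D is i-finite, i.e. for each j ≠ i the number a_{ij} := −min{ m ∈ ℕ₀ : (m+1)_{D_i} (D_i^m D_{ij} − 1) = 0 } is well-defined (the set is nonempty), and set a_{ii} = 2. Define the reflected datum R_i(D) by R_i(D)_j = D_j · D_{ij}^{−a_{ij}} · D_i^{a_{ij}²} and R_i(D)_{jk} = D_{jk} · D_{ik}^{−a_{ij}} · D_{ij}^{−a_{ik}} · D_i^{2 a_{ij} a_{ik}}. Then: (1)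 a_{ij}^{R_i(D)} = a_{ij}^{D} for all j; (2) R_i(D) is i-finite; (3) R_i(R_i(D)) = D. -/
namespace Stmt

/-- A Dynkin datum on `θ` vertices over a field `k`: vertex labels `D_j ∈ k^×` and edge
labels `D_{jl} ∈ k^×`.  (The conditions `D_{jl} = D_{lj}` and `D_{jj} = D_j²` are recorded
in `IsDynkin`.) -/
structure DynkinDatum (k : Type*) [Field k] (θ : ℕ) where
  v : Fin θ → kˣ
  e : Fin θ → Fin θ → kˣ

variable {k : Type*} [Field k] {θ : ℕ}

/-- The conventions on the labels of a Dynkin datum: `D_{jl} = D_{lj}` and `D_{jj} = D_j²`. -/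
def IsDynkin (D : DynkinDatum k θ) : Prop :=
  (∀ j l, D.e j l = D.e l j) ∧ (∀ j, D.e j j = D.v j * D.v j)

/-- The q-integer `(m)_a = 1 + a + ⋯ + a^{m−1}`. -/
def qInt (a : k) (m : ℕ) : k := ∑ i ∈ Finset.range m, a ^ i

/-- The set `{ m ∈ ℕ₀ : (m+1)_{D_i} (D_i^m D_{ij} − 1) = 0 }` whose minimum is `−a_{ij}`. -/
def cartanSet (D : DynkinDatum k θ) (i j : Fin θ) : Set ℕ :=
  {m : ℕ | qInt (D.v i : k) (m + 1) * ((D.v i : k) ^ m * (D.e i j : k) - 1) = 0}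

/-- The Cartan-type integers of a Dynkin datum: `a_{ii} = 2` and, for `j ≠ i`,
`a_{ij} = −min{ m : (m+1)_{D_i} (D_i^m D_{ij} − 1) = 0 }`. -/
noncomputable def aij (D : DynkinDatum k θ) (i j : Fin θ) : ℤ :=
  if i = j then 2 else -(Int.ofNat (sInf (cartanSet D i j)))

/-- `D` is `i`-finite: the minima defining `a_{ij}` exist for all `j ≠ i`. -/
def IFinite (D : DynkinDatum k θ) (i : Fin θ) : Prop :=
  ∀ j, j ≠ i → (cartanSet D i j).Nonempty

/-- The `i`-th reflection `R_i(D)` of a Dynkin datum: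
`R_i(D)_j = D_j D_{ij}^{−a_{ij}} D_i^{a_{ij}²}` and
`R_i(D)_{jl} = D_{jl} D_{il}^{−a_{ij}} D_{ij}^{−a_{il}} D_i^{2 a_{ij} a_{il}}`. -/
noncomputable def reflect (D : DynkinDatum k θ) (i : Fin θ) : DynkinDatum k θ where
  v j := D.v j * D.e i j ^ (-aij D i j) * D.v i ^ (aij D i j ^ 2)
  e j l := D.e j l * D.e i l ^ (-aij D i j) * D.e i j ^ (-aij D i l) *
    D.v i ^ (2 * aij D i j * aij D i l)

/-- The set `{ m ∈ ℕ₀ : (m+1)_{D_i} = 0 }` whose minimum is `m_i^D`. -/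
def qSet (D : DynkinDatum k θ) (i : Fin θ) : Set ℕ :=
  {m : ℕ | qInt (D.v i : k) (m + 1) = 0}

end Stmt

namespace Stmt


lemma qInt_mul_sub_one {k : Type*} [Field k] (Q : k) (d : ℕ) :
    qInt Q d * (Q - 1) = Q ^ d - 1 :=
  geom_sum_mul Q d

lemma core {k : Type*} [Field k] (Q E : k) (hQ : Q ≠ 0) (hE : E ≠ 0) (n : ℕ)
    (hn : qInt Q (n+1) * (Q^n * E - 1) = 0)
    (hmin : ∀ m < n, qInt Q (m+1) * (Q^m * E - 1) ≠ 0) :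
    (qInt Q (n+1) * (Q^n * (E⁻¹ * (Q^(2*n))⁻¹) - 1) = 0) ∧
    ∀ m < n, qInt Q (m+1) * (Q^m * (E⁻¹ * (Q^(2*n))⁻¹) - 1) ≠ 0 := by
  have hQn : Q ^ n ≠ 0 := pow_ne_zero _ hQ
  have hX : Q ^ n * E ≠ 0 := mul_ne_zero hQn hE
  constructor
  · have h1 : Q^n * (E⁻¹ * (Q^(2*n))⁻¹) = (Q^n * E)⁻¹ := by
      rw [mul_inv]
      field_simp
      ring
    rw [h1]
    have h2 : qInt Q (n+1) * ((Q^n*E)⁻¹ - 1) =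
        qInt Q (n+1) * (Q^n*E - 1) * (-(Q^n*E)⁻¹) := by
      field_simp
      ring
    rw [h2, hn, zero_mul]
  · intro m hm hc
    rcases mul_eq_zero.mp hc with h | h
    · exact hmin m hm (by rw [h, zero_mul])
    · have h' := sub_eq_zero.mp h
      have key : E * Q^(2*n) = Q^m := by
        field_simp at h'
        linear_combination -h'
      by_cases hQ1 : Q = 1
      · subst hQ1
        simp only [one_pow, mul_one] at key
        have hn0 : 0 < n := lt_of_le_of_lt (Nat.zero_le m) hm
        exact hmin 0 hn0 (by simp [qInt, key])
      · have hm' : Q ^ m ≠ 0 := pow_ne_zero _ hQ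
        have h2nm : Q ^ (2*n - m) * E = 1 := by
          have h1 : Q^(2*n-m) * Q^m = Q^(2*n) := by rw [← pow_add]; congr 1; omega
          have h2 : Q^(2*n-m) * E * Q^m = 1 * Q^m := by
            calc Q^(2*n-m) * E * Q^m = E * (Q^(2*n-m) * Q^m) := by ring
              _ = E * Q^(2*n) := by rw [h1]
              _ = 1 * Q^m := by rw [key, one_mul]
          exact mul_right_cancel₀ hm' h2
        rcases mul_eq_zero.mp hn with hq | hx
        · have hpow : Q^(n+1) = 1 := by
            have h3 := qInt_mul_sub_one Q (n+1)
            rw [hq, zero_mul] at h3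
            exact (sub_eq_zero.mp h3.symm)
          refine hmin (n - m - 1) (by omega) ?_
          have hq' : Q ^ (n - m - 1) * E = 1 := by
            have h3 : Q^(n - m - 1) * Q^(n+1) = Q^(2*n - m) := by
              rw [← pow_add]; congr 1; omega
            calc Q^(n-m-1) * E = Q^(n-m-1) * Q^(n+1) * E := by rw [hpow, mul_one]
              _ = Q^(2*n-m) * E := by rw [h3]
              _ = 1 := h2nm
          rw [hq', sub_self, mul_zero]
        · have hx' : Q ^ n * E = 1 := sub_eq_zero.mp hx
          have hd : Q ^ (n - m) = 1 := by
            have h3 : Q^(n-m) * (Q^n * E) = Q^(2*n-m) * E := by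
              rw [← mul_assoc, ← pow_add]; congr 2; omega
            rw [hx', h2nm, mul_one] at h3
            exact h3
          have hqd : qInt Q (n - m) = 0 := by
            have h3 := qInt_mul_sub_one Q (n - m)
            rw [hd, sub_self] at h3
            rcases mul_eq_zero.mp h3 with h4 | h4
            · exact h4
            · exact absurd (sub_eq_zero.mp h4) hQ1
          refine hmin (n - m - 1) (by omega) ?_
          rw [show n - m - 1 + 1 = n - m by omega, hqd, zero_mul]

lemma aij_self {k : Type*} [Field k] {θ : ℕ} (D : DynkinDatum k θ) (i : Fin θ) :
    aij D i i = 2 := by simp [aij]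

lemma reflect_v {k : Type*} [Field k] {θ : ℕ} (D : DynkinDatum k θ) (i j : Fin θ) :
    (reflect D i).v j = D.v j * D.e i j ^ (-aij D i j) * D.v i ^ (aij D i j ^ 2) := rfl

lemma reflect_e {k : Type*} [Field k] {θ : ℕ} (D : DynkinDatum k θ) (i j l : Fin θ) :
    (reflect D i).e j l = D.e j l * D.e i l ^ (-aij D i j) * D.e i j ^ (-aij D i l) *
      D.v i ^ (2 * aij D i j * aij D i l) := rfl

lemma reflect_v_i {k : Type*} [Field k] {θ : ℕ} (D : DynkinDatum k θ) (hD : IsDynkin D)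
    (i : Fin θ) : (reflect D i).v i = D.v i := by
  rw [reflect_v, aij_self, hD.2 i]
  rw [← Additive.ofMul.apply_eq_iff_eq]
  simp only [ofMul_mul, ofMul_zpow, ofMul_inv]
  module

lemma reflect_e_row {k : Type*} [Field k] {θ : ℕ} (D : DynkinDatum k θ) (hD : IsDynkin D)
    (i j : Fin θ) : (reflect D i).e i j = (D.e i j)⁻¹ * D.v i ^ (2 * aij D i j) := by
  rw [reflect_e, aij_self, hD.2 i]
  rw [← Additive.ofMul.apply_eq_iff_eq]
  simp only [ofMul_mul, ofMul_zpow, ofMul_inv]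
  module

lemma DynkinDatum.ext' {k : Type*} [Field k] {θ : ℕ} {A B : DynkinDatum k θ}
    (hv : A.v = B.v) (he : A.e = B.e) : A = B := by
  cases A; cases B; cases hv; cases he; rfl

/-- Let `D` be an `i`-finite Dynkin datum.  Then:
(1) the reflected datum has the same `i`-th row of Cartan integers,
`a_{ij}^{R_i(D)} = a_{ij}^D` for all `j` (hence also `s_i^{R_i(D)} = s_i^D` and
`m_i^{R_i(D)} = m_i^D`); (2) `R_i(D)` is `i`-finite; (3) `R_i(R_i(D)) = D`. -/
theorem reflect_cartan_eq_and_involutive {k : Type*} [Field k] {θ : ℕ}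
    (D : DynkinDatum k θ) (hD : IsDynkin D) (i : Fin θ) (hfin : IFinite D i) :
    (∀ j : Fin θ, aij (reflect D i) i j = aij D i j) ∧
    qSet (reflect D i) i = qSet D i ∧
    IFinite (reflect D i) i ∧
    reflect (reflect D i) i = D := by
  have hvi : (reflect D i).v i = D.v i := reflect_v_i D hD i
  have key : ∀ j, j ≠ i → (cartanSet (reflect D i) i j).Nonempty ∧
      sInf (cartanSet (reflect D i) i j) = sInf (cartanSet D i j) := by
    intro j hj
    have hij : ¬ i = j := fun h => hj h.symm
    set n := sInf (cartanSet D i j) with hn_def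
    have hmem : n ∈ cartanSet D i j := Nat.sInf_mem (hfin j hj)
    have hmin' : ∀ m < n, m ∉ cartanSet D i j := fun m hm => Nat.notMem_of_lt_sInf hm
    have haij : aij D i j = -(n : ℤ) := by
      simp only [aij, if_neg hij, Int.ofNat_eq_natCast, hn_def]
    have hco : ((reflect D i).e i j : k) = ((D.e i j : k))⁻¹ * (((D.v i : k)) ^ (2*n))⁻¹ := by
      rw [reflect_e_row D hD i j, haij,
        show (2 * -(n:ℤ)) = -((2*n : ℕ):ℤ) by push_cast; ring, zpow_neg, zpow_natCast]
      simp
    obtain ⟨h1, h2⟩ := core (D.v i : k) (D.e i j : k) (Units.ne_zero _) (Units.ne_zero _) n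
      hmem (fun m hm hc => hmin' m hm hc)
    have hRmem : ∀ m, m ∈ cartanSet (reflect D i) i j ↔
        qInt ((D.v i : k)) (m+1) *
          ((D.v i : k)^m * ((D.e i j : k)⁻¹ * ((D.v i : k)^(2*n))⁻¹) - 1) = 0 := by
      intro m
      simp only [cartanSet, Set.mem_setOf_eq, hvi, hco]
    have hne : (cartanSet (reflect D i) i j).Nonempty := ⟨n, (hRmem n).mpr h1⟩
    refine ⟨hne, ?_⟩
    apply le_antisymm (Nat.sInf_le ((hRmem n).mpr h1))
    by_contra hlt
    push_neg at hlt
    exact h2 _ hlt ((hRmem _).mp (Nat.sInf_mem hne))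
  have ha : ∀ j : Fin θ, aij (reflect D i) i j = aij D i j := by
    intro j
    by_cases hji : j = i
    · subst hji; simp [aij]
    · have hij : ¬ i = j := fun h => hji h.symm
      simp only [aij, if_neg hij]
      exact congrArg (fun t => -(Int.ofNat t)) (key j hji).2
  refine ⟨ha, ?_, fun j hj => (key j hj).1, ?_⟩
  · simp only [qSet, hvi]
  · have hv3 : ∀ j, (reflect (reflect D i) i).v j = D.v j := by
      intro j
      rw [reflect_v (reflect D i) i j, ha j, hvi, reflect_e_row D hD i j, reflect_v D i j]
      rw [← Additive.ofMul.apply_eq_iff_eq]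
      simp only [ofMul_mul, ofMul_zpow, ofMul_inv]
      module
    have he3 : ∀ j l, (reflect (reflect D i) i).e j l = D.e j l := by
      intro j l
      rw [reflect_e (reflect D i) i j l, ha j, ha l, hvi, reflect_e_row D hD i j,
        reflect_e_row D hD i l, reflect_e D i j l]
      rw [← Additive.ofMul.apply_eq_iff_eq]
      simp only [ofMul_mul, ofMul_zpow, ofMul_inv]
      module
    exact DynkinDatum.ext' (funext hv3) (funext fun j => funext (he3 j))

end Stmt
end

section
/- Let k be a field and D a Dynkin datum (D_j, D_{jk} ∈ k^×) on θ vertices. Fix i and assume D is i-finite with Cartan integers a_{ij} = a_{ij}^D, and assume m_i := min{ m ∈ ℕ₀ : (m+1)_{D_i} = 0 } exists. Then for every j: (1) D_{ij}^{m_i + a_{ij}} · D_i^{−a_{ij}(1 + 2 m_i + a_{ij})} = 1; (2) D_j · D_{ij}^{m_i} · D_i^{−a_{ij}(2 m_i + 1)} = R_i(D)_j. -/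
namespace Stmt

private lemma zpow_congr' {G : Type*} [Group G] {v : G} {n : ℤ} (hv : v ^ n = 1)
    {s t : ℤ} (h : n ∣ s - t) : v ^ s = v ^ t := by
  obtain ⟨c, hc⟩ := h
  have hs : s = t + n * c := by linarith
  rw [hs, zpow_add, zpow_mul, hv, one_zpow, mul_one]

/-- Let `D` be an `i`-finite Dynkin datum such that
`m_i = min{ m : (m+1)_{D_i} = 0 }` exists.  Then for every `j`:
(1) `D_{ij}^{m_i + a_{ij}} · D_i^{−a_{ij}(1 + 2 m_i + a_{ij})} = 1`;
(2) `D_j · D_{ij}^{m_i} · D_i^{−a_{ij}(2 m_i + 1)} = R_i(D)_j`. -/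
theorem reflect_vertex_formula {k : Type*} [Field k] {θ : ℕ}
    (D : DynkinDatum k θ) (hD : IsDynkin D) (i : Fin θ) (hfin : IFinite D i)
    (hmi : (qSet D i).Nonempty) :
    ∀ j : Fin θ,
      D.e i j ^ (Int.ofNat (sInf (qSet D i)) + aij D i j) *
          D.v i ^ (-(aij D i j) * (1 + 2 * Int.ofNat (sInf (qSet D i)) + aij D i j)) = 1 ∧
      D.v j * D.e i j ^ (Int.ofNat (sInf (qSet D i))) *
          D.v i ^ (-(aij D i j) * (2 * Int.ofNat (sInf (qSet D i)) + 1)) =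
        (reflect D i).v j := by
  set m := sInf (qSet D i) with hmdef
  have hmmem : m ∈ qSet D i := Nat.sInf_mem hmi
  have h0 : qInt (D.v i : k) (m + 1) = 0 := hmmem
  have hvk : (D.v i : k) ^ (m + 1) = 1 := by
    have h1 := geom_sum_mul (D.v i : k) (m + 1)
    rw [show (∑ i_1 ∈ Finset.range (m + 1), (D.v i : k) ^ i_1) = qInt (D.v i : k) (m + 1)
      from rfl, h0, zero_mul] at h1
    exact sub_eq_zero.mp h1.symm
  have hvu : D.v i ^ ((m : ℤ) + 1) = 1 := by
    have h2 : D.v i ^ (m + 1) = 1 := Units.ext (by push_cast; exact hvk)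
    rw [show ((m : ℤ) + 1) = ((m + 1 : ℕ) : ℤ) by push_cast; ring, zpow_natCast]
    exact h2
  intro j
  by_cases hij : i = j
  · subst hij
    have ha : aij D i i = 2 := by simp [aij]
    rw [ha, hD.2 i]
    simp only [reflect, ha, hD.2 i, Int.ofNat_eq_natCast]
    rw [show D.v i * D.v i = D.v i ^ (2 : ℤ) by rw [zpow_two]]
    constructor
    · simp only [← zpow_mul, ← zpow_add]
      exact (zpow_congr' hvu ⟨-2, by ring⟩).trans (zpow_zero _)
    · rw [mul_assoc, mul_assoc]
      congr 1
      simp only [← zpow_mul, ← zpow_add]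
      exact zpow_congr' hvu ⟨-2, by ring⟩
  · have hj : j ≠ i := fun h => hij h.symm
    set m' := sInf (cartanSet D i j) with hm'def
    have ha : aij D i j = -(m' : ℤ) := by simp [aij, hij, hm'def]
    have hm'mem : m' ∈ cartanSet D i j := Nat.sInf_mem (hfin j hj)
    have hle : m' ≤ m := Nat.sInf_le (by simp only [cartanSet, Set.mem_setOf_eq, h0, zero_mul])
    rcases eq_or_lt_of_le hle with heq | hlt
    · have ha2 : aij D i j = -(m : ℤ) := by rw [ha, heq]
      rw [ha2]
      simp only [reflect, ha2, Int.ofNat_eq_natCast, neg_neg]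
      constructor
      · rw [show (m : ℤ) + -(m : ℤ) = 0 by ring, zpow_zero, one_mul]
        exact (zpow_congr' hvu ⟨m, by ring⟩).trans (zpow_zero _)
      · rw [mul_assoc, mul_assoc]
        congr 1
        congr 1
        exact zpow_congr' hvu ⟨m, by ring⟩
    · have hne : qInt (D.v i : k) (m' + 1) ≠ 0 := by
        intro h
        have : m ≤ m' := Nat.sInf_le (show m' ∈ qSet D i from h)
        omega
      have hek : (D.v i : k) ^ m' * (D.e i j : k) = 1 :=
        sub_eq_zero.mp ((mul_eq_zero.mp hm'mem).resolve_left hne)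
      have heu : D.e i j = D.v i ^ (-(m' : ℤ)) := by
        rw [zpow_neg, zpow_natCast]
        exact eq_inv_of_mul_eq_one_left (Units.ext (by push_cast; rw [mul_comm]; exact hek))
      rw [ha, heu]
      simp only [reflect, ha, heu, Int.ofNat_eq_natCast, neg_neg]
      constructor
      · simp only [← zpow_mul, ← zpow_add]
        exact (zpow_congr' hvu ⟨(m' : ℤ), by ring⟩).trans (zpow_zero _)
      · rw [mul_assoc, mul_assoc]
        congr 1
        simp only [← zpow_mul, ← zpow_add]
        exact zpow_congr' hvu ⟨(m' : ℤ), by ring⟩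


end Stmt
end

section
/- Let k be a field, θ ∈ ℕ, D a Dynkin datum on θ vertices with triangular bicharacter χ_D and associated character λ_D : ℤ^θ → k^× given by λ_D(α_j) = D_j. Let γ ∈ ℤ^θ and suppose m_γ := min{ m ∈ ℕ₀ : (m+1)_{χ_D(γ,γ)} = 0 } exists. For r = (r_1,…,r_θ) ∈ k^θ write t_v(r) = Π_j r_j^{n_j} for v = Σ n_j α_j (assume all r_j ≠ 0). Define Shap_γ(r) = Π_{m=1}^{m_γ} ( t_γ(r) − λ_D(γ) · χ_D(γ,γ)^{−m} ). Then Shap_γ(r) = 0 if and only if Shap_{−γ}(r) = 0. -/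
namespace Stmt

variable {k : Type*} [Field k] {θ : ℕ}

/-- Values of the "triangular" bicharacter `χ_D` on pairs of standard basis vectors:
`χ_D(α_j, α_j) = D_j`, `χ_D(α_j, α_l) = D_{jl}` for `j < l`, and `χ_D(α_l, α_j) = 1`
for `j < l`. -/
def chiMat (D : DynkinDatum k θ) (j l : Fin θ) : kˣ :=
  if j = l then D.v j else if j < l then D.e j l else 1

/-- The triangular bicharacter `χ_D : ℤ^θ × ℤ^θ → k^×` (determined by its values on the
standard basis vectors). -/
def chi (D : DynkinDatum k θ) (n n' : Fin θ → ℤ) : kˣ :=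
  ∏ j : Fin θ, ∏ l : Fin θ, chiMat D j l ^ (n j * n' l)

/-- The symmetric bicharacter `χ'_D : ℤ^θ × ℤ^θ → k^×` with `χ'_D(α_j, α_l) = D_{jl}`. -/
def chi' (D : DynkinDatum k θ) (n n' : Fin θ → ℤ) : kˣ :=
  ∏ j : Fin θ, ∏ l : Fin θ, D.e j l ^ (n j * n' l)

end Stmt

namespace Stmt

variable {k : Type*} [Field k] {θ : ℕ}

/-- The character `λ_D : ℤ^θ → k^×` with `λ_D(α_j) = D_j`. -/
def lamD (D : DynkinDatum k θ) (γ : Fin θ → ℤ) : kˣ := ∏ j : Fin θ, D.v j ^ (γ j)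

/-- The monomial `t_γ(r) = Π_j r_j^{γ_j}`. -/
def tval (γ : Fin θ → ℤ) (r : Fin θ → k) : k := ∏ j : Fin θ, r j ^ (γ j)

/-- The Shapovalov factor
`Shap_γ(r) = Π_{m=1}^{m_γ} ( t_γ(r) − λ_D(γ) χ_D(γ,γ)^{−m} )`, where
`m_γ = min{ m : (m+1)_{χ_D(γ,γ)} = 0 }`. -/
noncomputable def shapFac (D : DynkinDatum k θ) (γ : Fin θ → ℤ) (r : Fin θ → k) : k :=
  ∏ m ∈ Finset.Icc 1 (sInf {m : ℕ | qInt ((chi D γ γ : kˣ) : k) (m + 1) = 0}),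
    (tval γ r - ((lamD D γ : kˣ) : k) * ((chi D γ γ : kˣ) : k) ^ (-(Int.ofNat m)))

lemma shap_key {k : Type*} [Field k] (q t l : k) (hq0 : q ≠ 0) (ht : t ≠ 0)
    (hl : l ≠ 0) (M m : ℕ) (hq1 : q ^ (M + 1) = 1) (hm1 : 1 ≤ m) (hm2 : m ≤ M)
    (h : t - l * q ^ (-(m : ℤ)) = 0) :
    t⁻¹ - l⁻¹ * q ^ (-((M + 1 - m : ℕ) : ℤ)) = 0 := by
  have ht' : t = l * q ^ (-(m : ℤ)) := sub_eq_zero.mp h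
  have hexp : (-((M + 1 - m : ℕ) : ℤ)) = (m : ℤ) - ((M + 1 : ℕ) : ℤ) := by
    push_cast [Nat.cast_sub (by omega : m ≤ M + 1)]; ring
  have hqM : q ^ (((M + 1 : ℕ) : ℤ)) = 1 := by
    rw [zpow_natCast, hq1]
  rw [hexp, zpow_sub₀ hq0, hqM, div_one, zpow_natCast, ht', mul_inv,
    ← zpow_neg, neg_neg, zpow_natCast]
  ring

/-- Let `D` be a Dynkin datum, `γ ∈ ℤ^θ` with
`m_γ = min{ m : (m+1)_{χ_D(γ,γ)} = 0 }` existing, and `r ∈ (k^×)^θ`.  Then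
`Shap_γ(r) = 0` iff `Shap_{−γ}(r) = 0`. -/
theorem shapFac_zero_iff_neg {k : Type*} [Field k] {θ : ℕ}
    (D : DynkinDatum k θ) (hD : IsDynkin D) (γ : Fin θ → ℤ)
    (hm : ({m : ℕ | qInt ((chi D γ γ : kˣ) : k) (m + 1) = 0}).Nonempty)
    (r : Fin θ → k) (hr : ∀ j, r j ≠ 0) :
    shapFac D γ r = 0 ↔ shapFac D (-γ) r = 0 := by
  have hchi : chi D (-γ) (-γ) = chi D γ γ := by
    simp [chi, neg_mul_neg]
  set S := {m : ℕ | qInt ((chi D γ γ : kˣ) : k) (m + 1) = 0} with hS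
  set M := sInf S with hMdef
  have hq0 : ((chi D γ γ : kˣ) : k) ≠ 0 := Units.ne_zero _
  have hMmem : qInt ((chi D γ γ : kˣ) : k) (M + 1) = 0 := Nat.sInf_mem hm
  have hq1 : ((chi D γ γ : kˣ) : k) ^ (M + 1) = 1 := by
    have h : qInt ((chi D γ γ : kˣ) : k) (M + 1) * (((chi D γ γ : kˣ) : k) - 1)
        = ((chi D γ γ : kˣ) : k) ^ (M + 1) - 1 := geom_sum_mul _ (M + 1)
    rw [hMmem, zero_mul] at h
    exact sub_eq_zero.mp h.symm
  have hlam : ((lamD D (-γ) : kˣ) : k) = ((lamD D γ : kˣ) : k)⁻¹ := by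
    have : lamD D (-γ) = (lamD D γ)⁻¹ := by
      simp [lamD, zpow_neg, Finset.prod_inv_distrib]
    rw [this, Units.val_inv_eq_inv_val]
  have htv : tval (-γ) r = (tval γ r)⁻¹ := by
    simp [tval, zpow_neg, Finset.prod_inv_distrib]
  have ht0 : tval γ r ≠ 0 :=
    Finset.prod_ne_zero_iff.mpr fun j _ => zpow_ne_zero _ (hr j)
  have hl0 : ((lamD D γ : kˣ) : k) ≠ 0 := Units.ne_zero _
  unfold shapFac
  rw [hchi, hlam, htv, Finset.prod_eq_zero_iff, Finset.prod_eq_zero_iff]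
  constructor
  · rintro ⟨m, hmIcc, hfac⟩
    rw [Finset.mem_Icc] at hmIcc
    have hmIcc' : 1 ≤ m ∧ m ≤ M := hmIcc
    refine ⟨M + 1 - m, Finset.mem_Icc.mpr ⟨by omega, (by omega : M + 1 - m ≤ M)⟩, ?_⟩
    exact shap_key _ _ _ hq0 ht0 hl0 M m hq1 hmIcc'.1 hmIcc'.2 hfac
  · rintro ⟨m, hmIcc, hfac⟩
    rw [Finset.mem_Icc] at hmIcc
    have hmIcc' : 1 ≤ m ∧ m ≤ M := hmIcc
    refine ⟨M + 1 - m, Finset.mem_Icc.mpr ⟨by omega, (by omega : M + 1 - m ≤ M)⟩, ?_⟩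
    have := shap_key _ _ _ hq0 (inv_ne_zero ht0) (inv_ne_zero hl0) M m hq1
      hmIcc'.1 hmIcc'.2 hfac
    rwa [inv_inv, inv_inv] at this

end Stmt
end

section
/- Let k be a field, D a Dynkin datum on θ vertices, and let K = k(t_1,…,t_θ) be the rational function field. Define the extended Dynkin datum D^t on θ+1 vertices over K by D^t_j = D_j and D^t_{jl} = D_{jl} for j, l ≤ θ, D^t_{θ+1} = 1, and D^t_{j(θ+1)} = t_j for j ≤ θ. Then for each i ≤ θ: (1) the Cartan integer satisfies −a^{D^t}_{i(θ+1)} = m_i^D := min{ m ∈ ℕ₀ : (m+1)_{D_i} = 0 } (whenever either side exists); (2) D^t is i-finite if and only if D is i-finite and m_i^D exists. -/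
namespace Stmt

variable (k : Type*) [Field k] (θ : ℕ)

/-- The rational function field `K = k(t_1,…,t_θ)`. -/
abbrev RatFld := FractionRing (MvPolynomial (Fin θ) k)

/-- The canonical embedding `k^× → K^×`. -/
noncomputable def uMap (c : kˣ) : (RatFld k θ)ˣ :=
  Units.map
    ((algebraMap (MvPolynomial (Fin θ) k) (RatFld k θ)).comp
      (MvPolynomial.C : k →+* MvPolynomial (Fin θ) k)).toMonoidHom c

/-- The indeterminate `t_j` as a unit of `K = k(t_1,…,t_θ)`. -/
noncomputable def tUnit (j : Fin θ) : (RatFld k θ)ˣ :=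
  Units.mk0 (algebraMap (MvPolynomial (Fin θ) k) (RatFld k θ) (MvPolynomial.X j))
    (by
      intro h
      have hinj : Function.Injective
          (algebraMap (MvPolynomial (Fin θ) k) (RatFld k θ)) :=
        IsFractionRing.injective _ _
      rw [← map_zero (algebraMap (MvPolynomial (Fin θ) k) (RatFld k θ))] at h
      exact MvPolynomial.X_ne_zero j (hinj h))

/-- The extended Dynkin datum `D^t` on `θ+1` vertices over `K = k(t_1,…,t_θ)`:
`D^t_j = D_j`, `D^t_{jl} = D_{jl}` for `j, l ≤ θ`, `D^t_{θ+1} = 1`,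
`D^t_{j(θ+1)} = t_j`. -/
noncomputable def extD (D : DynkinDatum k θ) : DynkinDatum (RatFld k θ) (θ + 1) where
  v j := if h : (j : ℕ) < θ then uMap k θ (D.v ⟨j, h⟩) else 1
  e j l :=
    if hj : (j : ℕ) < θ then
      (if hl : (l : ℕ) < θ then uMap k θ (D.e ⟨j, hj⟩ ⟨l, hl⟩) else tUnit k θ ⟨j, hj⟩)
    else (if hl : (l : ℕ) < θ then tUnit k θ ⟨l, hl⟩ else 1)

noncomputable def phi : k →+* RatFld k θ :=
  ((algebraMap (MvPolynomial (Fin θ) k) (RatFld k θ)).comp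
      (MvPolynomial.C : k →+* MvPolynomial (Fin θ) k))

lemma phi_inj : Function.Injective (phi k θ) :=
  (IsFractionRing.injective (MvPolynomial (Fin θ) k) (RatFld k θ)).comp
    (MvPolynomial.C_injective (Fin θ) k)

lemma map_qInt (a : k) (m : ℕ) : phi k θ (qInt a m) = qInt (phi k θ a) m := by
  simp [qInt, map_sum, map_pow]

lemma factor_ne (a : k) (m : ℕ) (j : Fin θ) :
    (phi k θ a) ^ m *
      (algebraMap (MvPolynomial (Fin θ) k) (RatFld k θ) (MvPolynomial.X j)) - 1 ≠ 0 := by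
  have h : (phi k θ a) ^ m *
      (algebraMap (MvPolynomial (Fin θ) k) (RatFld k θ) (MvPolynomial.X j)) - 1
      = algebraMap (MvPolynomial (Fin θ) k) (RatFld k θ)
        (MvPolynomial.C (a ^ m) * MvPolynomial.X j - 1) := by
    simp [phi, map_sub, map_mul, map_pow, map_one]
  rw [h]
  intro hc
  have hinj := IsFractionRing.injective (MvPolynomial (Fin θ) k) (RatFld k θ)
  rw [← map_zero (algebraMap (MvPolynomial (Fin θ) k) (RatFld k θ))] at hc
  have := hinj hc
  have hco := congrArg (MvPolynomial.coeff 0) this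
  rw [MvPolynomial.coeff_sub, MvPolynomial.coeff_C_mul, MvPolynomial.coeff_zero_X] at hco
  simp at hco

lemma coe_uMap (c : kˣ) : ((uMap k θ c : (RatFld k θ)ˣ) : RatFld k θ) = phi k θ (c : k) := rfl

lemma coe_tUnit (j : Fin θ) : ((tUnit k θ j : (RatFld k θ)ˣ) : RatFld k θ) =
    algebraMap (MvPolynomial (Fin θ) k) (RatFld k θ) (MvPolynomial.X j) := rfl

variable {k θ}

lemma extD_v (D : DynkinDatum k θ) (i : Fin θ) :
    (extD k θ D).v i.castSucc = uMap k θ (D.v i) := by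
  simp [extD, i.is_lt]

lemma extD_e_last (D : DynkinDatum k θ) (i : Fin θ) :
    (extD k θ D).e i.castSucc (Fin.last θ) = tUnit k θ i := by
  simp [extD, i.is_lt]

lemma extD_e (D : DynkinDatum k θ) (j l : Fin θ) :
    (extD k θ D).e j.castSucc l.castSucc = uMap k θ (D.e j l) := by
  simp [extD, j.is_lt, l.is_lt]

lemma cartanSet_last (D : DynkinDatum k θ) (i : Fin θ) :
    cartanSet (extD k θ D) i.castSucc (Fin.last θ) = qSet D i := by
  ext m
  simp only [cartanSet, qSet, Set.mem_setOf_eq, extD_v, extD_e_last, coe_uMap, coe_tUnit]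
  constructor
  · intro h
    rcases mul_eq_zero.mp h with h | h
    · apply phi_inj k θ
      rw [map_qInt, h, map_zero]
    · exact absurd h (factor_ne k θ _ m i)
  · intro h
    rw [← map_qInt, h, map_zero, zero_mul]

lemma cartanSet_lt (D : DynkinDatum k θ) (i j : Fin θ) :
    cartanSet (extD k θ D) i.castSucc j.castSucc = cartanSet D i j := by
  ext m
  simp only [cartanSet, Set.mem_setOf_eq, extD_v, extD_e, coe_uMap]
  rw [← map_qInt, ← map_pow, ← map_one (phi k θ), ← map_mul, ← map_sub, ← map_mul]
  exact ⟨fun h => phi_inj k θ (by rw [h, map_zero]), fun h => by rw [h, map_zero]⟩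

/-- Let `D` be a Dynkin datum on `θ` vertices and `D^t` the extended
datum on `θ+1` vertices over `k(t_1,…,t_θ)`.  Then for each `i ≤ θ`:
(1) the minimum defining `−a^{D^t}_{i(θ+1)}` exists iff `m_i^D` exists, and whenever they
exist, `−a^{D^t}_{i(θ+1)} = m_i^D`; (2) `D^t` is `i`-finite iff `D` is `i`-finite and
`m_i^D` exists. -/
theorem extD_cartan_last_and_iFinite {k : Type*} [Field k] {θ : ℕ}
    (D : DynkinDatum k θ) (hD : IsDynkin D) (i : Fin θ) :
    ((cartanSet (extD k θ D) i.castSucc (Fin.last θ)).Nonempty ↔ (qSet D i).Nonempty) ∧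
    ((qSet D i).Nonempty →
      -(aij (extD k θ D) i.castSucc (Fin.last θ)) = Int.ofNat (sInf (qSet D i))) ∧
    (IFinite (extD k θ D) i.castSucc ↔ (IFinite D i ∧ (qSet D i).Nonempty)) := by
  have h1 := cartanSet_last D i
  have hne : i.castSucc ≠ Fin.last θ := (Fin.castSucc_lt_last i).ne
  refine ⟨by rw [h1], ?_, ?_⟩
  · intro _
    rw [aij, if_neg hne, h1, neg_neg]
  · constructor
    · intro h
      refine ⟨fun j hj => ?_, ?_⟩
      · have := h j.castSucc (by simpa [Fin.castSucc_inj] using hj)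
        rwa [cartanSet_lt] at this
      · have := h (Fin.last θ) (Ne.symm hne)
        rwa [h1] at this
    · rintro ⟨hf, hq⟩ j hj
      by_cases hlt : (j : ℕ) < θ
      · have hj' : j = (⟨(j : ℕ), hlt⟩ : Fin θ).castSucc := Fin.ext rfl
        rw [hj', cartanSet_lt]
        refine hf _ fun hc => hj ?_
        rw [hj', hc]
      · have hj' : j = Fin.last θ := Fin.ext (by have := j.isLt; simp only [Fin.val_last]; omega)
        rw [hj', h1]
        exact hq


end Stmt
end
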